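/- arXiv:2009.08377 — 6 statements merged into one kernel-verified Lean document; each statement's English description precedes it below -/
import Mathlib

section
/- Let n be a natural number and let U ⊆ ℂ be a nonempty open set which is simply connected as a topological subspace and with 0 ∉ U. Let h : ℂ → ℂ be complex-differentiable on U with h(z) ≠ 0 for every z ∈ U, and suppose that z^n = h(z)^n · h'(z)^2 for all z ∈ U, where h' denotes the complex derivative. Assume there is a continuous path γ : [0,1] → ℂ such that γ(t) ∈ U for all t < 1, γ(1) = 0, and h(γ(t)) tends to 0 as t tends to 1 from the left. Then h(z)^(n+2) = z^(n+2) for every z ∈ U. -/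
open Complex Filter Set

/-- Rotation lemma, power form: a holomorphic map `h` on a simply connected open set
`U` avoiding `0`, preserving the quadratic differential `z^n dz^2`
(i.e. `z^n = h z ^ n * (deriv h z)^2`), which extends to send the zero of the
differential to itself along a path, satisfies `h z ^ (n+2) = z ^ (n+2)`. -/
theorem rotation_lemma_power
    (n : ℕ) (U : Set ℂ) (hUne : U.Nonempty) (hUopen : IsOpen U)
    (hUsc : SimplyConnectedSpace U) (hU0 : (0 : ℂ) ∉ U)
    (h : ℂ → ℂ) (hdiff : DifferentiableOn ℂ h U)
    (hne : ∀ z ∈ U, h z ≠ 0)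
    (heq : ∀ z ∈ U, z ^ n = h z ^ n * (deriv h z) ^ 2)
    (γ : ℝ → ℂ) (hγcont : ContinuousOn γ (Set.Icc 0 1))
    (hγU : ∀ t ∈ Set.Ico (0 : ℝ) 1, γ t ∈ U)
    (hγ1 : γ 1 = 0)
    (hγlim : Tendsto (fun t => h (γ t)) (nhdsWithin 1 (Set.Iio 1)) (nhds 0)) :
    ∀ z ∈ U, h z ^ (n + 2) = z ^ (n + 2) := by
  -- basic facts
  have hzne : ∀ z ∈ U, z ≠ 0 := fun z hz h0 => hU0 (h0 ▸ hz)
  have hbne : ∀ z ∈ U, deriv h z ≠ 0 := by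
    intro z hz hb0
    have h1 := heq z hz
    rw [hb0] at h1
    have h2 : z ^ n = 0 := by rw [h1]; ring
    exact pow_ne_zero n (hzne z hz) h2
  have hanal : AnalyticOnNhd ℂ h U := hdiff.analyticOnNhd hUopen
  have hd2 : DifferentiableOn ℂ (deriv h) U := (hanal.deriv).differentiableOn
  -- the key function K
  set K : ℂ → ℂ := fun z => h z ^ n * (z * deriv h z - h z) ^ 2 with hKdef
  -- derivative facts at points of U
  have hha : ∀ z ∈ U, HasDerivAt h (deriv h z) z := fun z hz =>
    (hdiff.differentiableAt (hUopen.mem_nhds hz)).hasDerivAt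
  have hhb : ∀ z ∈ U, HasDerivAt (deriv h) (deriv (deriv h) z) z := fun z hz =>
    (hd2.differentiableAt (hUopen.mem_nhds hz)).hasDerivAt
  -- K has zero derivative on U
  have key : ∀ z ∈ U, HasDerivAt K 0 z := by
    intro z hz
    set a := h z
    set b := deriv h z
    set b' := deriv (deriv h) z
    have ha := hne z hz
    have hb := hbne z hz
    have hz0 := hzne z hz
    -- the differentiated constraint
    have hd1 : HasDerivAt (fun w => h w ^ n * (deriv h w) ^ 2)
        (((n : ℂ) * a ^ (n - 1) * b) * b ^ 2 + a ^ n * ((2 : ℕ) * b ^ (2 - 1) * b')) z :=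
      ((hha z hz).pow n).mul ((hhb z hz).pow 2)
    have hd0 : HasDerivAt (fun w : ℂ => w ^ n)
        (((n : ℂ) * a ^ (n - 1) * b) * b ^ 2 + a ^ n * ((2 : ℕ) * b ^ (2 - 1) * b')) z := by
      apply hd1.congr_of_eventuallyEq
      filter_upwards [hUopen.mem_nhds hz] with w hw
      exact heq w hw
    have E := (hasDerivAt_pow n z).unique hd0
    -- derivative of K
    have hK1 : HasDerivAt K
        (((n : ℂ) * a ^ (n - 1) * b) * (z * b - a) ^ 2
          + a ^ n * ((2 : ℕ) * (z * b - a) ^ (2 - 1) * (1 * b + z * b' - b))) z := by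
      exact ((hha z hz).pow n).mul
        ((((hasDerivAt_id z).mul (hhb z hz)).sub (hha z hz)).pow 2)
    convert hK1 using 1
    have C := heq z hz
    have hbb : b ≠ 0 := hb
    rw [eq_comm, ← sub_eq_zero]
    have hmul : b * (((n : ℂ) * a ^ (n - 1) * b) * (z * b - a) ^ 2
          + a ^ n * ((2 : ℕ) * (z * b - a) ^ (2 - 1) * (1 * b + z * b' - b)) - 0) = 0 := by
      cases n with
      | zero =>
        simp only [Nat.cast_zero, pow_zero] at E C ⊢
        linear_combination (-(z * (z * b - a))) * E
      | succ m =>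
        simp only [Nat.succ_sub_one] at E ⊢
        push_cast at E ⊢
        linear_combination (-(z * (z * b - a))) * E + (((m : ℂ) + 1) * (z * b - a)) * C
    rcases mul_eq_zero.mp hmul with h1 | h1
    · exact absurd h1 hbb
    · exact h1
  -- K is constant on U
  have hKdiff : DifferentiableOn ℂ K U := fun z hz =>
    ((key z hz).differentiableAt).differentiableWithinAt
  have hKanal : AnalyticOnNhd ℂ K U := hKdiff.analyticOnNhd hUopen
  obtain ⟨z₀, hz₀⟩ := hUne
  have hpre : IsPreconnected U := by
    have : PathConnectedSpace U := inferInstance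
    exact (isPathConnected_iff_pathConnectedSpace.mpr this).isConnected.isPreconnected
  have hconst : ∀ z ∈ U, K z = K z₀ := by
    obtain ⟨r, hr, hball⟩ := Metric.isOpen_iff.mp hUopen z₀ hz₀
    have hev : K =ᶠ[nhds z₀] (fun _ => K z₀) := by
      filter_upwards [Metric.ball_mem_nhds z₀ hr] with w hw
      refine (convex_ball z₀ r).is_const_of_fderivWithin_eq_zero
        (hKdiff.mono hball) ?_ hw (Metric.mem_ball_self hr)
      intro x hx
      rw [fderivWithin_of_mem_nhds (Metric.isOpen_ball.mem_nhds hx)]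
      have := (key x (hball hx)).hasFDerivAt.fderiv
      rw [this]
      ext
      simp
    exact fun z hz =>
      hKanal.eqOn_of_preconnected_of_eventuallyEq analyticOnNhd_const hpre hz₀ hev hz
  -- limit along the path
  set l : Filter ℝ := nhdsWithin 1 (Set.Iio 1) with hl
  have hIoo : Set.Ioo (0 : ℝ) 1 ∈ l := Ioo_mem_nhdsLT_of_mem (by constructor <;> norm_num)
  have hγmem : ∀ᶠ t in l, γ t ∈ U := by
    filter_upwards [hIoo] with t ht
    exact hγU t ⟨le_of_lt ht.1, ht.2⟩
  have hγ0 : Tendsto γ l (nhds 0) := by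
    have h1 : l = nhdsWithin 1 (Set.Ioo 0 1) := (nhdsWithin_Ioo_eq_nhdsLT (by norm_num)).symm
    have h2 : l ≤ nhdsWithin 1 (Set.Icc 0 1) := by
      rw [h1]; exact nhdsWithin_mono 1 Set.Ioo_subset_Icc_self
    have := hγcont 1 (by constructor <;> norm_num)
    rw [ContinuousWithinAt, hγ1] at this
    exact this.mono_left h2
  have tendA : Tendsto (fun t => γ t ^ (n + 2)) l (nhds 0) := by
    have := hγ0.pow (n + 2)
    simpa using this
  have tendB : Tendsto (fun t => h (γ t) ^ (n + 2)) l (nhds 0) := by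
    have := hγlim.pow (n + 2)
    simpa using this
  set w : ℝ → ℂ := fun t => γ t * h (γ t) ^ (n + 1) * deriv h (γ t) with hwdef
  have hw2 : ∀ᶠ t in l, (w t) ^ 2 = γ t ^ (n + 2) * h (γ t) ^ (n + 2) := by
    filter_upwards [hγmem] with t ht
    have C := heq (γ t) ht
    simp only [hwdef]
    linear_combination (-(γ t ^ 2 * h (γ t) ^ (n + 2))) * C
  have hw2lim : Tendsto (fun t => (w t) ^ 2) l (nhds 0) := by
    apply Tendsto.congr' (hw2.mono fun _ ht => ht.symm)
    simpa using tendA.mul tendB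
  have hwlim : Tendsto w l (nhds 0) := by
    rw [tendsto_zero_iff_norm_tendsto_zero]
    have heqn : (fun t => ‖w t‖) = fun t => Real.sqrt ‖(w t) ^ 2‖ := by
      funext t
      rw [norm_pow, Real.sqrt_sq (norm_nonneg _)]
    rw [heqn, show (0:ℝ) = Real.sqrt 0 by rw [Real.sqrt_zero]]
    exact (Real.continuous_sqrt.tendsto 0).comp
      (tendsto_zero_iff_norm_tendsto_zero.mp hw2lim)
  have hKγ : ∀ᶠ t in l, K (γ t) = γ t ^ (n + 2) + h (γ t) ^ (n + 2) - 2 * w t := by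
    filter_upwards [hγmem] with t ht
    have C := heq (γ t) ht
    simp only [hKdef, hwdef]
    linear_combination (-(γ t ^ 2)) * C
  have hKlim : Tendsto (fun t => K (γ t)) l (nhds 0) := by
    apply Tendsto.congr' (hKγ.mono fun _ ht => ht.symm)
    have : Tendsto (fun t => γ t ^ (n + 2) + h (γ t) ^ (n + 2) - 2 * w t) l
        (nhds (0 + 0 - 2 * 0)) := (tendA.add tendB).sub (tendsto_const_nhds.mul hwlim)
    simpa using this
  have hKconst : Tendsto (fun t => K (γ t)) l (nhds (K z₀)) := by
    apply Tendsto.congr' _ tendsto_const_nhds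
    filter_upwards [hγmem] with t ht
    exact (hconst (γ t) ht).symm
  have hK0 : K z₀ = 0 := tendsto_nhds_unique hKconst hKlim
  -- conclude
  intro z hz
  have hKz : K z = 0 := (hconst z hz).trans hK0
  have ha := hne z hz
  have hz0 := hzne z hz
  simp only [hKdef] at hKz
  have h2 : (z * deriv h z - h z) ^ 2 = 0 := by
    rcases mul_eq_zero.mp hKz with h1 | h1
    · exact absurd h1 (pow_ne_zero n ha)
    · exact h1
  have h3 : z * deriv h z = h z :=
    sub_eq_zero.mp (pow_eq_zero_iff two_ne_zero |>.mp h2)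
  have C := heq z hz
  linear_combination (-(z ^ 2)) * C - (h z ^ n * (h z + z * deriv h z)) * h3
end

section
/- Let n be a natural number and let U ⊆ ℂ be a nonempty open set which is simply connected as a topological subspace and with 0 ∉ U. Let h : ℂ → ℂ be complex-differentiable on U with h(z) ≠ 0 for every z ∈ U, and suppose z^n = h(z)^n · h'(z)^2 for all z ∈ U. Assume there is a continuous path γ : [0,1] → ℂ with γ(t) ∈ U for all t < 1, γ(1) = 0, and h(γ(t)) → 0 as t → 1⁻. Then there exists a natural number j < n+2 such that h(z) = exp(2πij/(n+2)) · z for every z ∈ U. -/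
open Complex Filter Set

/-- Rotation lemma: near a zero of order `n` of the Hopf differential, in a natural
coordinate where the differential is `z^n dz^2`, a holomorphic map `h` leaving the
differential invariant and fixing the zero is a rational rotation of angle
`2πj/(n+2)`. -/
theorem rotation_lemma
    (n : ℕ) (U : Set ℂ) (hUne : U.Nonempty) (hUopen : IsOpen U)
    (hUsc : SimplyConnectedSpace U) (hU0 : (0 : ℂ) ∉ U)
    (h : ℂ → ℂ) (hdiff : DifferentiableOn ℂ h U)
    (hne : ∀ z ∈ U, h z ≠ 0)
    (heq : ∀ z ∈ U, z ^ n = h z ^ n * (deriv h z) ^ 2)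
    (γ : ℝ → ℂ) (hγcont : ContinuousOn γ (Set.Icc 0 1))
    (hγU : ∀ t ∈ Set.Ico (0 : ℝ) 1, γ t ∈ U)
    (hγ1 : γ 1 = 0)
    (hγlim : Tendsto (fun t => h (γ t)) (nhdsWithin 1 (Set.Iio 1)) (nhds 0)) :
    ∃ j : ℕ, j < n + 2 ∧
      ∀ z ∈ U, h z = Complex.exp (2 * Real.pi * Complex.I * j / (n + 2)) * z := by
  haveI := hUsc
  have hzne : ∀ z ∈ U, z ≠ 0 := fun z hz h0 => hU0 (h0 ▸ hz)
  have hanal : AnalyticOnNhd ℂ h U := hdiff.analyticOnNhd hUopen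
  have hanal' : AnalyticOnNhd ℂ (deriv h) U := hanal.deriv_of_isOpen hUopen
  have hdiff' : DifferentiableOn ℂ (deriv h) U := hanal'.differentiableOn
  set b : ℂ → ℂ := fun z => h z ^ (n + 2) + z ^ (n + 2)
      - 2 * (z * h z ^ (n + 1) * deriv h z) with hbdef
  have hbanal : AnalyticOnNhd ℂ b U := by
    apply ((hanal.pow _).add (analyticOnNhd_id.pow _)).sub
    exact analyticOnNhd_const.mul ((analyticOnNhd_id.mul (hanal.pow _)).mul hanal')
  -- helper to avoid natural subtraction issues
  have hpow_sub : ∀ w : ℂ, (n : ℂ) * w ^ (n - 1) * w = (n : ℂ) * w ^ n := by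
    intro w
    cases n with
    | zero => simp
    | succ m => rw [Nat.add_sub_cancel]; rw [pow_succ]; ring
  -- b has zero derivative on U
  have hb0 : ∀ z ∈ U, HasDerivAt b 0 z := by
    intro z hz
    have hzU : z ≠ 0 := hzne z hz
    have hAne : h z ≠ 0 := hne z hz
    have hA : HasDerivAt h (deriv h z) z := (hdiff.differentiableAt (hUopen.mem_nhds hz)).hasDerivAt
    have hB : HasDerivAt (deriv h) (deriv (deriv h) z) z :=
      (hdiff'.differentiableAt (hUopen.mem_nhds hz)).hasDerivAt
    have hR1 := heq z hz
    have hBne : deriv h z ≠ 0 := by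
      intro hB0
      rw [hB0] at hR1
      simp at hR1
      exact hzU hR1.1
    have hR2 : (n : ℂ) * z ^ (n - 1)
        = (n : ℂ) * h z ^ (n - 1) * deriv h z * (deriv h z) ^ 2
          + h z ^ n * (2 * deriv h z ^ 1 * deriv (deriv h) z) := by
      have h1 : HasDerivAt (fun w => h w ^ n * (deriv h w) ^ 2)
          ((n : ℂ) * h z ^ (n - 1) * deriv h z * (deriv h z) ^ 2
            + h z ^ n * ((2 : ℕ) * deriv h z ^ (2 - 1) * deriv (deriv h) z)) z :=
        (hA.pow n).mul (hB.pow 2)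
      have hev : (fun w : ℂ => w ^ n) =ᶠ[nhds z] fun w => h w ^ n * (deriv h w) ^ 2 :=
        Filter.eventuallyEq_of_mem (hUopen.mem_nhds hz) fun w hw => heq w hw
      have h2 : HasDerivAt (fun w => h w ^ n * (deriv h w) ^ 2) ((n : ℂ) * z ^ (n - 1)) z :=
        (hasDerivAt_pow n z).congr_of_eventuallyEq hev.symm
      simpa using h2.unique h1
    have hR2' : (n : ℂ) * z ^ n * h z
        = (n : ℂ) * h z ^ n * (deriv h z) ^ 3 * z
          + 2 * h z ^ n * deriv h z * deriv (deriv h) z * z * h z := by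
      have hz' := hpow_sub z
      have hA' := hpow_sub (h z)
      linear_combination (-(h z)) * hz' + (deriv h z) ^ 3 * z * hA' + z * h z * hR2
    have hb' : HasDerivAt b
        (((n : ℂ) + 2) * h z ^ (n + 1) * deriv h z + ((n : ℂ) + 2) * z ^ (n + 1)
          - 2 * ((1 * h z ^ (n + 1) + z * (((n : ℂ) + 1) * h z ^ n * deriv h z)) * deriv h z
              + z * h z ^ (n + 1) * deriv (deriv h) z)) z := by
      have := ((hA.pow (n + 2)).add (hasDerivAt_pow (n + 2) z)).sub
        ((((hasDerivAt_id' z).mul (hA.pow (n + 1))).mul hB).const_mul 2)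
      simp only [Nat.add_sub_cancel] at this
      convert this using 2
      · rfl
      · rfl
      · rfl
      · push_cast; ring
      · simp only [Pi.mul_apply, Pi.pow_apply]; push_cast; ring
    have hE0 : (((n : ℂ) + 2) * h z ^ (n + 1) * deriv h z + ((n : ℂ) + 2) * z ^ (n + 1)
          - 2 * ((1 * h z ^ (n + 1) + z * (((n : ℂ) + 1) * h z ^ n * deriv h z)) * deriv h z
              + z * h z ^ (n + 1) * deriv (deriv h) z)) = 0 := by
      have h5 : (((n : ℂ) + 2) * h z ^ (n + 1) * deriv h z + ((n : ℂ) + 2) * z ^ (n + 1)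
          - 2 * ((1 * h z ^ (n + 1) + z * (((n : ℂ) + 1) * h z ^ n * deriv h z)) * deriv h z
              + z * h z ^ (n + 1) * deriv (deriv h) z)) * deriv h z = 0 := by
        linear_combination (((n : ℂ) + 2) * z * deriv h z - (n : ℂ) * h z) * hR1 + hR2'
      exact (mul_eq_zero.mp h5).resolve_right hBne
    rw [hE0] at hb'
    exact hb'
  -- b is constant on U
  have hconn : IsPreconnected U := by
    rw [isPreconnected_iff_preconnectedSpace]
    infer_instance
  obtain ⟨u₀, hu₀⟩ := hUne
  obtain ⟨ε, hε, hball⟩ := Metric.isOpen_iff.mp hUopen u₀ hu₀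
  have hconst : ∀ x ∈ Metric.ball u₀ ε, b x = b u₀ := by
    intro x hx
    apply (convex_ball u₀ ε).is_const_of_fderivWithin_eq_zero
      ((hbanal.differentiableOn).mono hball) _ hx (Metric.mem_ball_self hε)
    intro y hy
    rw [fderivWithin_of_isOpen Metric.isOpen_ball hy, (hb0 y (hball hy)).hasFDerivAt.fderiv]
    ext
    simp
  have hev : b =ᶠ[nhds u₀] fun _ => b u₀ :=
    Filter.eventuallyEq_of_mem (Metric.ball_mem_nhds u₀ hε) hconst
  have hbeq : EqOn b (fun _ => b u₀) U :=
    hbanal.eqOn_of_preconnected_of_eventuallyEq analyticOnNhd_const hconn hu₀ hev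
  -- limit along γ shows b u₀ = 0
  have hmemU : ∀ᶠ t in nhdsWithin (1 : ℝ) (Set.Iio 1), γ t ∈ U := by
    filter_upwards [Ioo_mem_nhdsLT_of_mem (by constructor <;> norm_num : (1 : ℝ) ∈ Set.Ioc 0 1)]
      with t ht
    exact hγU t ⟨le_of_lt ht.1, ht.2⟩
  have hγ0 : Tendsto γ (nhdsWithin (1 : ℝ) (Set.Iio 1)) (nhds 0) := by
    rw [← nhdsWithin_Ico_eq_nhdsLT (zero_lt_one (α := ℝ))]
    have h1m : (1 : ℝ) ∈ Set.Icc (0 : ℝ) 1 := by norm_num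
    have := (hγcont 1 h1m).mono Set.Ico_subset_Icc_self
    simpa [ContinuousWithinAt, hγ1] using this
  have hF : Tendsto (fun t => h (γ t) ^ (n + 2)) (nhdsWithin (1 : ℝ) (Set.Iio 1)) (nhds 0) := by
    simpa using hγlim.pow (n + 2)
  have hG : Tendsto (fun t => γ t ^ (n + 2)) (nhdsWithin (1 : ℝ) (Set.Iio 1)) (nhds 0) := by
    simpa using hγ0.pow (n + 2)
  have hSsq : ∀ z ∈ U, (z * h z ^ (n + 1) * deriv h z) ^ 2 = h z ^ (n + 2) * z ^ (n + 2) := by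
    intro z hz
    linear_combination (-(z ^ 2) * h z ^ (n + 2)) * heq z hz
  have hS : Tendsto (fun t => γ t * h (γ t) ^ (n + 1) * deriv h (γ t))
      (nhdsWithin (1 : ℝ) (Set.Iio 1)) (nhds 0) := by
    rw [tendsto_zero_iff_norm_tendsto_zero]
    have hsq : Tendsto (fun t => ‖γ t * h (γ t) ^ (n + 1) * deriv h (γ t)‖ ^ 2)
        (nhdsWithin (1 : ℝ) (Set.Iio 1)) (nhds 0) := by
      have hFG : Tendsto (fun t => ‖h (γ t) ^ (n + 2) * γ t ^ (n + 2)‖)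
          (nhdsWithin (1 : ℝ) (Set.Iio 1)) (nhds 0) := by
        simpa using (hF.mul hG).norm
      refine (tendsto_congr' ?_).mpr hFG
      filter_upwards [hmemU] with t ht
      rw [← norm_pow, hSsq _ ht]
    have h2 : Tendsto (fun t => Real.sqrt (‖γ t * h (γ t) ^ (n + 1) * deriv h (γ t)‖ ^ 2))
        (nhdsWithin (1 : ℝ) (Set.Iio 1)) (nhds (Real.sqrt 0)) :=
      (Real.continuous_sqrt.tendsto 0).comp hsq
    rw [Real.sqrt_zero] at h2
    exact h2.congr fun t => Real.sqrt_sq (norm_nonneg _)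
  have hbγ : Tendsto (fun t => b (γ t)) (nhdsWithin (1 : ℝ) (Set.Iio 1)) (nhds 0) := by
    have := (hF.add hG).sub (hS.const_mul 2)
    simpa using this
  have hb0c : b u₀ = 0 := by
    have h1 : Tendsto (fun t => b (γ t)) (nhdsWithin (1 : ℝ) (Set.Iio 1)) (nhds (b u₀)) := by
      refine (tendsto_congr' ?_).mpr tendsto_const_nhds
      filter_upwards [hmemU] with t ht
      exact hbeq ht
    exact tendsto_nhds_unique h1 hbγ
  -- conclude h z ^ (n+2) = z ^ (n+2) on U
  have hFGeq : ∀ z ∈ U, h z ^ (n + 2) = z ^ (n + 2) := by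
    intro z hz
    have hbz : h z ^ (n + 2) + z ^ (n + 2) - 2 * (z * h z ^ (n + 1) * deriv h z) = 0 :=
      (hbeq hz).trans hb0c
    have hsq : (h z ^ (n + 2) - z ^ (n + 2)) ^ 2 = 0 := by
      linear_combination (h z ^ (n + 2) + z ^ (n + 2) + 2 * (z * h z ^ (n + 1) * deriv h z)) * hbz
        + 4 * hSsq z hz
    have := sq_eq_zero_iff.mp hsq
    exact sub_eq_zero.mp this
  -- h z / z is a continuous (n+2)-th root of unity, hence constant
  have hnpos : 0 < n + 2 := by omega
  have hval : ∀ z ∈ U, h z / z ∈ (↑(Polynomial.nthRootsFinset (n + 2) (1 : ℂ)) : Set ℂ) := by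
    intro z hz
    rw [Finset.mem_coe, Polynomial.mem_nthRootsFinset hnpos (1 : ℂ), div_pow, hFGeq z hz,
      div_self (pow_ne_zero _ (hzne z hz))]
  have hcontf : ContinuousOn (fun z => h z / z) U :=
    hdiff.continuousOn.div continuousOn_id fun z hz => hzne z hz
  have himg : IsPreconnected ((fun z => h z / z) '' U) := hconn.image _ hcontf
  have hsing : ∀ z ∈ U, h z / z = h u₀ / u₀ := by
    intro z hz
    by_contra hne'
    have hcase := isPreconnected_iff_subset_of_disjoint_closed.mp himg {h u₀ / u₀}
      ((↑(Polynomial.nthRootsFinset (n + 2) (1 : ℂ)) : Set ℂ) \ {h u₀ / u₀})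
      isClosed_singleton (((Polynomial.nthRootsFinset (n + 2) (1 : ℂ)).finite_toSet.diff).isClosed)
      (by
        rintro x ⟨w, hw, rfl⟩
        by_cases hx : h w / w = h u₀ / u₀
        · exact Or.inl hx
        · exact Or.inr ⟨hval w hw, hx⟩)
      (by
        ext x
        simp only [Set.mem_inter_iff, Set.mem_singleton_iff, Set.mem_diff, Set.mem_empty_iff_false,
          iff_false]
        rintro ⟨_, h1, _, h2⟩
        exact h2 h1)
    rcases hcase with hcase | hcase
    · exact hne' (hcase ⟨z, hz, rfl⟩)
    · exact (hcase ⟨u₀, hu₀, rfl⟩).2 rfl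
  -- identify the constant as a root of unity
  have hζpow : (h u₀ / u₀) ^ (n + 2) = 1 := by
    rw [div_pow, hFGeq u₀ hu₀, div_self (pow_ne_zero _ (hzne u₀ hu₀))]
  haveI : NeZero (n + 2) := ⟨by omega⟩
  obtain ⟨j, hj, hje⟩ :=
    (Complex.isPrimitiveRoot_exp (n + 2) (by omega)).eq_pow_of_pow_eq_one hζpow
  refine ⟨j, hj, fun z hz => ?_⟩
  have hratio := hsing z hz
  have hexp : Complex.exp (2 * Real.pi * Complex.I * j / (n + 2)) = h u₀ / u₀ := by
    rw [← hje, ← Complex.exp_nat_mul]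
    congr 1
    push_cast
    ring
  rw [hexp, ← hratio, div_mul_cancel₀]
  exact hzne z hz
end

section
/- Let n be a natural number and let U ⊆ ℂ be a nonempty open set which is simply connected as a topological subspace and with 0 ∉ U. Let h : ℂ → ℂ be a map such that z ↦ conj(h(z)) is complex-differentiable on U, h(z) ≠ 0 for every z ∈ U, and z^n = conj(h(z))^n · (g'(z))^2 for all z ∈ U, where g(z) = conj(h(z)) and g' is its complex derivative. Assume there is a continuous path γ : [0,1] → ℂ with γ(t) ∈ U for all t < 1, γ(1) = 0, and h(γ(t)) → 0 as t → 1⁻. Then there exists a natural number j < n+2 such that h(z) = exp(2πij/(n+2)) · conj(z) for every z ∈ U. -/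
open Complex Filter Set

/-- A function with zero derivative on an open preconnected subset of `ℂ` is constant. -/
private lemma aux_const_of_deriv_zero {U : Set ℂ} (hUopen : IsOpen U)
    (hUconn : IsPreconnected U) {f : ℂ → ℂ}
    (hf : ∀ z ∈ U, HasDerivAt f 0 z) {x : ℂ} (hx : x ∈ U) :
    ∀ y ∈ U, f y = f x := by
  have hmem : ∀ z ∈ U, ∃ r > 0, Metric.ball z r ⊆ U := fun z hz =>
    Metric.isOpen_iff.1 hUopen z hz
  choose! r hrpos hrsub using hmem
  have key : ∀ z ∈ U, ∀ w ∈ Metric.ball z (r z), f w = f z := by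
    intro z hz w hw
    have hconv : Convex ℝ (Metric.ball z (r z)) := convex_ball z (r z)
    have hdo : DifferentiableOn ℂ f (Metric.ball z (r z)) := fun p hp =>
      (hf p (hrsub z hz hp)).differentiableAt.differentiableWithinAt
    refine hconv.is_const_of_fderivWithin_eq_zero hdo (fun p hp => ?_) hw
      (Metric.mem_ball_self (hrpos z hz))
    rw [fderivWithin_of_isOpen Metric.isOpen_ball hp,
      (hf p (hrsub z hz hp)).hasFDerivAt.fderiv]
    ext
    simp
  set u := ⋃ z ∈ {z | z ∈ U ∧ f z = f x}, Metric.ball z (r z) with hu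
  set v := ⋃ z ∈ {z | z ∈ U ∧ f z ≠ f x}, Metric.ball z (r z) with hv
  have hou : IsOpen u := isOpen_biUnion fun _ _ => Metric.isOpen_ball
  have hov : IsOpen v := isOpen_biUnion fun _ _ => Metric.isOpen_ball
  have hdisj : Disjoint u v := by
    rw [Set.disjoint_left]
    rintro w hwu hwv
    rw [hu, Set.mem_iUnion₂] at hwu
    rw [hv, Set.mem_iUnion₂] at hwv
    obtain ⟨z1, hz1m, hb1⟩ := hwu
    obtain ⟨z2, hz2m, hb2⟩ := hwv
    exact hz2m.2 ((key z2 hz2m.1 w hb2).symm.trans ((key z1 hz1m.1 w hb1).trans hz1m.2))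
  have hsub2 : U ⊆ u ∪ v := by
    intro z hz
    by_cases hfz : f z = f x
    · exact Or.inl (Set.mem_biUnion ⟨hz, hfz⟩ (Metric.mem_ball_self (hrpos z hz)))
    · exact Or.inr (Set.mem_biUnion ⟨hz, hfz⟩ (Metric.mem_ball_self (hrpos z hz)))
  have hne : (U ∩ u).Nonempty :=
    ⟨x, hx, Set.mem_biUnion ⟨hx, rfl⟩ (Metric.mem_ball_self (hrpos x hx))⟩
  have hUu : U ⊆ u := hUconn.subset_left_of_subset_union hou hov hdisj hsub2 hne
  intro y hy
  obtain ⟨z, hzm, hb⟩ := Set.mem_iUnion₂.1 (hUu hy)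
  exact (key z hzm.1 y hb).trans hzm.2

/-- Anti-holomorphic rotation lemma: in a natural coordinate where the Hopf
differential is `z^n dz^2`, an anti-holomorphic map leaving the differential
invariant and fixing the zero is a reflection `z ↦ e^{2πij/(n+2)} conj z`. -/
theorem antiholomorphic_rotation_lemma
    (n : ℕ) (U : Set ℂ) (hUne : U.Nonempty) (hUopen : IsOpen U)
    (hUsc : SimplyConnectedSpace U) (hU0 : (0 : ℂ) ∉ U)
    (h : ℂ → ℂ) (g : ℂ → ℂ) (hg : ∀ z, g z = (starRingEnd ℂ) (h z))
    (hdiff : DifferentiableOn ℂ g U)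
    (hne : ∀ z ∈ U, h z ≠ 0)
    (heq : ∀ z ∈ U, z ^ n = g z ^ n * (deriv g z) ^ 2)
    (γ : ℝ → ℂ) (hγcont : ContinuousOn γ (Set.Icc 0 1))
    (hγU : ∀ t ∈ Set.Ico (0 : ℝ) 1, γ t ∈ U)
    (hγ1 : γ 1 = 0)
    (hγlim : Tendsto (fun t => h (γ t)) (nhdsWithin 1 (Set.Iio 1)) (nhds 0)) :
    ∃ j : ℕ, j < n + 2 ∧
      ∀ z ∈ U, h z = Complex.exp (2 * Real.pi * Complex.I * j / (n + 2)) *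
        (starRingEnd ℂ) z := by
  classical
  obtain ⟨z₀, hz₀⟩ := hUne
  have hUpre : IsPreconnected U :=
    (isPathConnected_iff_pathConnectedSpace.mpr inferInstance).isConnected.isPreconnected
  -- basic pointwise facts
  have hz0 : ∀ z ∈ U, z ≠ 0 := fun z hz hzz => hU0 (hzz ▸ hz)
  have hgz : ∀ z ∈ U, g z ≠ 0 := by
    intro z hz
    rw [hg z]
    simpa using hne z hz
  have hgder : ∀ z ∈ U, HasDerivAt g (deriv g z) z := fun z hz =>
    (hdiff.differentiableAt (hUopen.mem_nhds hz)).hasDerivAt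
  have hg'an : AnalyticOnNhd ℂ (deriv g) U := (hdiff.analyticOnNhd hUopen).deriv
  -- the auxiliary holomorphic function S = g^(n+1) * g'
  have hSd : ∀ z ∈ U, HasDerivAt (fun w => g w ^ (n+1) * deriv g w)
      (deriv (fun w => g w ^ (n+1) * deriv g w) z) z := fun z hz =>
    (((hdiff.differentiableAt (hUopen.mem_nhds hz)).pow (n+1)).mul
      ((hg'an z hz).differentiableAt)).hasDerivAt
  -- S^2 = g^(n+2) * z^n
  have hS2 : ∀ z ∈ U, (g z ^ (n+1) * deriv g z) ^ 2 = g z ^ (n+2) * z ^ n := by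
    intro z hz
    linear_combination (-(g z ^ (n+2))) * heq z hz
  have hSne : ∀ z ∈ U, g z ^ (n+1) * deriv g z ≠ 0 := by
    intro z hz hS0
    have := hS2 z hz
    rw [hS0] at this
    have h3 : g z ^ (n+2) * z ^ n = 0 := by linear_combination -this
    rcases mul_eq_zero.1 h3 with h1 | h1
    · exact hgz z hz ((pow_eq_zero_iff (by omega : n + 2 ≠ 0)).1 h1)
    · exact hz0 z hz (pow_eq_zero_iff'.1 h1).1
  -- master identity: 2 z S' = (n+2) z^(n+1) + n S
  have hM : ∀ z ∈ U, 2 * z * deriv (fun w => g w ^ (n+1) * deriv g w) z =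
      ((n : ℂ) + 2) * z ^ (n+1) + (n : ℂ) * (g z ^ (n+1) * deriv g z) := by
    intro z hz
    have hzne : z ≠ 0 := hz0 z hz
    have h1 := (hasDerivAt_id' z).mul (hSd z hz)
    have h2 := h1.pow 2
    have h3 := ((hgder z hz).pow (n+2)).mul (hasDerivAt_pow (n+2) z)
    have hee : (fun w => (w * (g w ^ (n+1) * deriv g w)) ^ 2) =ᶠ[nhds z]
        (fun w => g w ^ (n+2) * w ^ (n+2)) := by
      filter_upwards [hUopen.mem_nhds hz] with w hw
      linear_combination w ^ 2 * hS2 w hw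
    have hkey := h2.deriv.symm.trans (hee.deriv_eq.trans h3.deriv)
    push_cast at hkey
    simp only [Pi.mul_apply, Pi.pow_apply, Pi.sub_apply] at hkey
    have hcancel : (2 * z * deriv (fun w => g w ^ (n+1) * deriv g w) z) *
        (z ^ (n+2) * (g z ^ (n+1) * deriv g z)) =
        (((n : ℂ) + 2) * z ^ (n+1) + (n : ℂ) * (g z ^ (n+1) * deriv g z)) *
        (z ^ (n+2) * (g z ^ (n+1) * deriv g z)) := by
      linear_combination z ^ (n+1) * hkey - (((n : ℂ) + 2) * z ^ (n+2)) * hS2 z hz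
    exact mul_right_cancel₀ (mul_ne_zero (pow_ne_zero _ hzne) (hSne z hz)) hcancel
  -- the conserved quantity K = (z^(n+1) - S)^2 * z^2 / z^(n+2) has zero derivative
  have hKd : ∀ z ∈ U, HasDerivAt
      (fun w => (w ^ (n+1) - g w ^ (n+1) * deriv g w) ^ 2 * w ^ 2 / w ^ (n+2)) 0 z := by
    intro z hz
    have hzne : z ≠ 0 := hz0 z hz
    have hd := ((((hasDerivAt_pow (n+1) z).sub (hSd z hz)).pow 2).mul
      (hasDerivAt_pow 2 z)).div (hasDerivAt_pow (n+2) z) (pow_ne_zero _ hzne)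
    refine hd.congr_deriv ?_
    symm
    rw [eq_div_iff (pow_ne_zero _ (pow_ne_zero _ hzne))]
    simp only [Pi.mul_apply, Pi.pow_apply, Pi.sub_apply]
    push_cast
    linear_combination (z ^ (n+3) * (z ^ (n+1) - g z ^ (n+1) * deriv g z)) * hM z hz
  -- hence K is constant on U
  have hKconst := aux_const_of_deriv_zero hUopen hUpre hKd hz₀
  -- simplified form of K on U
  have hKsimp : ∀ z ∈ U,
      (z ^ (n+1) - g z ^ (n+1) * deriv g z) ^ 2 * z ^ 2 / z ^ (n+2) =
      z ^ (n+2) - 2 * (z * (g z ^ (n+1) * deriv g z)) + g z ^ (n+2) := by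
    intro z hz
    have hzne : z ≠ 0 := hz0 z hz
    rw [div_eq_iff (pow_ne_zero _ hzne)]
    linear_combination z ^ 2 * hS2 z hz
  -- limits along the path
  set l := nhdsWithin (1 : ℝ) (Set.Iio 1) with hl
  have hIoo : Set.Ioo (0 : ℝ) 1 ∈ l := by
    rw [hl, ← Set.Ioi_inter_Iio]
    exact inter_mem (mem_nhdsWithin_of_mem_nhds (Ioi_mem_nhds one_pos)) self_mem_nhdsWithin
  have hγmem : ∀ᶠ t in l, γ t ∈ U := by
    filter_upwards [hIoo] with t ht
    exact hγU t ⟨ht.1.le, ht.2⟩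
  have hγ0 : Tendsto γ l (nhds 0) := by
    have h1 : Tendsto γ (nhdsWithin 1 (Set.Icc 0 1)) (nhds 0) := by
      have := hγcont 1 (Set.right_mem_Icc.mpr zero_le_one)
      rw [ContinuousWithinAt, hγ1] at this
      exact this
    exact h1.mono_left (nhdsWithin_le_iff.mpr (mem_of_superset hIoo Set.Ioo_subset_Icc_self))
  have hgγ : Tendsto (fun t => g (γ t)) l (nhds 0) := by
    have hconj : Tendsto (fun t => (starRingEnd ℂ) (h (γ t))) l (nhds 0) := by
      have := (Complex.continuous_conj.tendsto 0).comp hγlim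
      simpa [Function.comp_def] using this
    exact hconj.congr fun t => (hg (γ t)).symm
  have T1 : Tendsto (fun t => γ t ^ (n+2)) l (nhds 0) := by
    have := hγ0.pow (n+2)
    simpa using this
  have T3 : Tendsto (fun t => g (γ t) ^ (n+2)) l (nhds 0) := by
    have := hgγ.pow (n+2)
    simpa using this
  have hA : Tendsto (fun t => γ t * (g (γ t) ^ (n+1) * deriv g (γ t))) l (nhds 0) := by
    rw [tendsto_zero_iff_norm_tendsto_zero]
    have hprod : Tendsto (fun t => ‖g (γ t) ^ (n+2) * γ t ^ (n+2)‖) l (nhds 0) := by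
      have := (T3.mul T1).norm
      simpa using this
    have hsqrt : Tendsto (fun t => Real.sqrt ‖g (γ t) ^ (n+2) * γ t ^ (n+2)‖) l (nhds 0) := by
      have := (Real.continuous_sqrt.tendsto 0).comp hprod
      simpa only [Function.comp_def, Real.sqrt_zero] using this
    apply hsqrt.congr'
    filter_upwards [hγmem] with t hu
    have h2 := hS2 (γ t) hu
    have h3 : g (γ t) ^ (n+2) * γ t ^ (n+2) =
        (γ t * (g (γ t) ^ (n+1) * deriv g (γ t))) ^ 2 := by
      linear_combination (-(γ t ^ 2)) * h2
    rw [h3, norm_pow, Real.sqrt_sq (norm_nonneg _)]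
  have hKtend : Tendsto (fun t =>
      (γ t ^ (n+1) - g (γ t) ^ (n+1) * deriv g (γ t)) ^ 2 * γ t ^ 2 / γ t ^ (n+2))
      l (nhds 0) := by
    have hsum : Tendsto (fun t =>
        γ t ^ (n+2) - 2 * (γ t * (g (γ t) ^ (n+1) * deriv g (γ t))) + g (γ t) ^ (n+2))
        l (nhds 0) := by
      have := (T1.sub (hA.const_mul 2)).add T3
      simpa using this
    apply hsum.congr'
    filter_upwards [hγmem] with t hu
    exact (hKsimp (γ t) hu).symm
  have hKc0 : (z₀ ^ (n+1) - g z₀ ^ (n+1) * deriv g z₀) ^ 2 * z₀ ^ 2 / z₀ ^ (n+2) = 0 := by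
    have hconstt : Tendsto (fun t =>
        (γ t ^ (n+1) - g (γ t) ^ (n+1) * deriv g (γ t)) ^ 2 * γ t ^ 2 / γ t ^ (n+2))
        l (nhds ((z₀ ^ (n+1) - g z₀ ^ (n+1) * deriv g z₀) ^ 2 * z₀ ^ 2 / z₀ ^ (n+2))) := by
      apply tendsto_const_nhds.congr'
      filter_upwards [hγmem] with t hu
      exact (hKconst (γ t) hu).symm
    exact tendsto_nhds_unique hconstt hKtend
  -- hence S = z^(n+1) on U
  have hTz : ∀ z ∈ U, g z ^ (n+1) * deriv g z = z ^ (n+1) := by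
    intro z hz
    have hzne : z ≠ 0 := hz0 z hz
    have hK0 : (z ^ (n+1) - g z ^ (n+1) * deriv g z) ^ 2 * z ^ 2 / z ^ (n+2) = 0 :=
      (hKconst z hz).trans hKc0
    rw [div_eq_zero_iff] at hK0
    rcases hK0 with hK0 | hK0
    · rcases mul_eq_zero.1 hK0 with h1 | h1
      · have h2 := (pow_eq_zero_iff (by norm_num : (2:ℕ) ≠ 0)).1 h1
        exact (sub_eq_zero.1 h2).symm
      · exact absurd ((pow_eq_zero_iff (by norm_num : (2:ℕ) ≠ 0)).1 h1) hzne
    · exact absurd ((pow_eq_zero_iff (by omega : n + 2 ≠ 0)).1 hK0) hzne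
  -- then g^(n+2) = z^(n+2) and z g' = g on U
  have hgn2 : ∀ z ∈ U, g z ^ (n+2) = z ^ (n+2) := by
    intro z hz
    have hzne : z ≠ 0 := hz0 z hz
    have h1 := hTz z hz
    have h2 := hS2 z hz
    rw [h1] at h2
    have h3 : g z ^ (n+2) * z ^ n = z ^ (n+2) * z ^ n := by linear_combination -h2
    exact mul_right_cancel₀ (pow_ne_zero n hzne) h3
  have hφd : ∀ z ∈ U, HasDerivAt (fun w => g w / w) 0 z := by
    intro z hz
    have hzne : z ≠ 0 := hz0 z hz
    have hbz : deriv g z * z = g z := by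
      have h1 := hTz z hz
      have h2 := hgn2 z hz
      have h3 : deriv g z * z * z ^ (n+1) = g z * z ^ (n+1) := by
        linear_combination (g z) * h1 - (deriv g z) * h2
      exact mul_right_cancel₀ (pow_ne_zero _ hzne) h3
    have hdd := (hgder z hz).div (hasDerivAt_id' z) hzne
    refine hdd.congr_deriv ?_
    rw [mul_one, hbz, sub_self, zero_div]
  have hφconst := aux_const_of_deriv_zero hUopen hUpre hφd hz₀
  -- the rotation number
  have hω : (g z₀ / z₀) ^ (n+2) = 1 := by
    rw [div_pow, hgn2 z₀ hz₀, div_self (pow_ne_zero _ (hz0 z₀ hz₀))]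
  have hωc : ((starRingEnd ℂ) (g z₀ / z₀)) ^ (n+2) = 1 := by
    rw [← map_pow, hω, map_one]
  haveI : NeZero (n + 2) := ⟨by omega⟩
  obtain ⟨j, hj, hjω⟩ :=
    (Complex.isPrimitiveRoot_exp (n+2) (by omega)).eq_pow_of_pow_eq_one hωc
  refine ⟨j, hj, fun z hz => ?_⟩
  have hgz2 : g z = (g z₀ / z₀) * z := by
    rw [← hφconst z hz]
    field_simp [hz0 z hz]
  have hhz : h z = (starRingEnd ℂ) (g z) := by
    rw [hg z, Complex.conj_conj]
  rw [hhz, hgz2, map_mul, ← hjω, ← Complex.exp_nat_mul]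
  congr 2
  push_cast
  ring
end

section
/- Let X be a topological space, let r ≥ 1 be a natural number, let ε > 0, and let g : ℂ → X be continuous on the open ball B of radius ε centered at 0 in ℂ, satisfying g(exp(2πi/r)·z) = g(z) for every z ∈ B. Then there exists a map G : ℂ → X which is continuous on the open ball of radius ε^r centered at 0 and satisfies g(z) = G(z^r) for every z ∈ B. -/
/-- A map on a disk invariant under the rotation `z ↦ e^{2πi/r} z` factors through
the degree-`r` branched covering `z ↦ z^r`. -/
theorem factor_through_branched_cover
    (X : Type*) [TopologicalSpace X] (r : ℕ) (hr : 1 ≤ r) (ε : ℝ) (hε : 0 < ε)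
    (g : ℂ → X) (hcont : ContinuousOn g (Metric.ball (0 : ℂ) ε))
    (hinv : ∀ z ∈ Metric.ball (0 : ℂ) ε,
      g (Complex.exp (2 * Real.pi * Complex.I / r) * z) = g z) :
    ∃ G : ℂ → X, ContinuousOn G (Metric.ball (0 : ℂ) (ε ^ r)) ∧
      ∀ z ∈ Metric.ball (0 : ℂ) ε, g z = G (z ^ r) := by
  have hrne : r ≠ 0 := by omega
  set ζ : ℂ := Complex.exp (2 * Real.pi * Complex.I / r) with hζdef
  have hprim : IsPrimitiveRoot ζ r := Complex.isPrimitiveRoot_exp r hrne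
  have hζabs : ‖ζ‖ = 1 := by
    have h1 : ‖ζ‖ ^ r = 1 ^ r := by
      rw [← norm_pow, hprim.pow_eq_one, norm_one, one_pow]
    exact (pow_left_inj₀ (norm_nonneg _) zero_le_one hrne).mp h1
  set S := Metric.ball (0 : ℂ) ε with hS
  set T := Metric.ball (0 : ℂ) (ε ^ r) with hT
  -- invariance under all powers of ζ
  have hinvpow : ∀ (k : ℕ), ∀ z ∈ S, g (ζ ^ k * z) = g z := by
    intro k
    induction k with
    | zero => intro z hz; simp
    | succ k ih =>
      intro z hz
      have hmem : ζ ^ k * z ∈ S := by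
        simp only [hS, Metric.mem_ball, dist_zero_right] at hz ⊢
        rwa [norm_mul, norm_pow, hζabs, one_pow, one_mul]
      have := hinv (ζ ^ k * z) hmem
      rw [pow_succ, mul_comm (ζ ^ k) ζ, mul_assoc]
      rw [this]
      exact ih z hz
  -- g is constant on fibers of z ↦ z^r
  have hfib : ∀ z₁ ∈ S, ∀ z₂ ∈ S, z₁ ^ r = z₂ ^ r → g z₁ = g z₂ := by
    intro z₁ hz₁ z₂ hz₂ hpow
    rcases eq_or_ne z₂ 0 with rfl | hz₂0
    · have : z₁ = 0 := by
        have := hpow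
        rw [zero_pow hrne] at this
        exact pow_eq_zero_iff hrne |>.mp this
      rw [this]
    · have hξ : (z₁ / z₂) ^ r = 1 := by
        rw [div_pow, hpow, div_self (pow_ne_zero _ hz₂0)]
      haveI : NeZero r := ⟨hrne⟩
      obtain ⟨i, _, hi⟩ := hprim.eq_pow_of_pow_eq_one hξ
      have hz₁eq : z₁ = ζ ^ i * z₂ := by
        rw [hi]; field_simp
      rw [hz₁eq, hinvpow i z₂ hz₂]
  -- choice of r-th roots
  have hex : ∀ w : ℂ, ∃ z : ℂ, z ^ r = w := fun w =>
    IsAlgClosed.exists_pow_nat_eq w (Nat.pos_of_ne_zero hrne)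
  set root : ℂ → ℂ := fun w => (hex w).choose with hrootdef
  have hroot : ∀ w, (root w) ^ r = w := fun w => (hex w).choose_spec
  have hrootmem : ∀ w ∈ T, root w ∈ S := by
    intro w hw
    simp only [hT, hS, Metric.mem_ball, dist_zero_right] at hw ⊢
    have : ‖root w‖ ^ r < ε ^ r := by
      rw [← norm_pow, hroot]; exact hw
    exact (pow_lt_pow_iff_left₀ (norm_nonneg _) hε.le hrne).mp this
  set G : ℂ → X := fun w => g (root w) with hGdef
  have hfactor : ∀ z ∈ S, g z = G (z ^ r) := by
    intro z hz
    have hmem : z ^ r ∈ T := by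
      simp only [hS, Metric.mem_ball, dist_zero_right] at hz ⊢
      rw [hT]
      simp only [Metric.mem_ball, dist_zero_right, norm_pow]
      exact pow_lt_pow_left₀ hz (norm_nonneg _) hrne
    exact hfib z hz (root (z ^ r)) (hrootmem _ hmem) (hroot (z ^ r)).symm
  refine ⟨G, ?_, hfactor⟩
  -- continuity via the quotient map S → T
  -- openness of z ↦ z^r
  have hopen : ∀ s : Set ℂ, IsOpen s → IsOpen ((fun z : ℂ => z ^ r) '' s) := by
    have hana : AnalyticOnNhd ℂ (fun z : ℂ => z ^ r) Set.univ := fun z _ =>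
      (analyticAt_id).pow r
    rcases hana.is_constant_or_isOpen isPreconnected_univ with h | h
    · exfalso
      obtain ⟨w, hw⟩ := h
      have h0 := hw 0 (Set.mem_univ _)
      have h1 := hw 1 (Set.mem_univ _)
      simp only [zero_pow hrne, one_pow] at h0 h1
      exact zero_ne_one (h0.trans h1.symm)
    · exact fun s hs => h s (Set.subset_univ s) hs
  -- the restricted map p : S → T
  have hpmem : ∀ z : S, (z : ℂ) ^ r ∈ T := by
    intro z
    have hz := z.2
    simp only [hS, Metric.mem_ball, dist_zero_right] at hz
    simp only [hT, Metric.mem_ball, dist_zero_right, norm_pow]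
    exact pow_lt_pow_left₀ hz (norm_nonneg _) hrne
  set p : S → T := fun z => ⟨(z : ℂ) ^ r, hpmem z⟩ with hpdef
  have hpc : Continuous p := by
    apply Continuous.subtype_mk
    exact (continuous_pow r).comp continuous_subtype_val
  have hpsurj : Function.Surjective p := by
    rintro ⟨w, hw⟩
    exact ⟨⟨root w, hrootmem w hw⟩, Subtype.ext (hroot w)⟩
  have hpopen : IsOpenMap p := by
    intro V hV
    rw [isOpen_induced_iff] at hV ⊢
    obtain ⟨U, hU, rfl⟩ := hV
    refine ⟨(fun z : ℂ => z ^ r) '' (U ∩ S), hopen _ (hU.inter Metric.isOpen_ball), ?_⟩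
    ext t
    simp only [Set.mem_preimage, Set.mem_image]
    constructor
    · rintro ⟨z, ⟨hzU, hzS⟩, hzt⟩
      exact ⟨⟨z, hzS⟩, hzU, Subtype.ext hzt⟩
    · rintro ⟨z, hzU, hzt⟩
      exact ⟨z, ⟨hzU, z.2⟩, congrArg Subtype.val hzt⟩
  have hq : Topology.IsQuotientMap p := hpopen.isQuotientMap hpc hpsurj
  rw [continuousOn_iff_continuous_restrict]
  rw [hq.continuous_iff]
  have heq : (T.restrict G) ∘ p = S.restrict g := by
    funext z
    exact (hfactor z z.2).symm
  change Continuous (T.restrict G ∘ p)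
  rw [heq]
  exact continuousOn_iff_continuous_restrict.mp hcont
end

section
/- Define u : ℝ × ℝ → ℝ × ℝ by u(x, y) = (x, x·y) and let D be the open unit ball centered at the origin of ℝ × ℝ. Then: (1) for every open set D₁ ⊆ D containing (0,0) there exists a nonempty open set D₂ ⊆ ℝ × ℝ with D₂ ⊆ u(D₁); and (2) there is no open set D′ containing (0,0) with D′ ⊆ u(D). -/
/-- Failure of unique continuation for harmonic maps: for `u(x,y) = (x, xy)`,
every open neighborhood `D₁ ⊆ D` of the origin in the unit disk `D` has image
containing a nonempty open set, but no open neighborhood of the origin is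
contained in `u(D)`. -/
theorem unique_continuation_fails
    (u : ℝ × ℝ → ℝ × ℝ) (hu : ∀ x y : ℝ, u (x, y) = (x, x * y))
    (D : Set (ℝ × ℝ)) (hD : D = Metric.ball (0 : ℝ × ℝ) 1) :
    (∀ D₁ : Set (ℝ × ℝ), D₁ ⊆ D → IsOpen D₁ → ((0 : ℝ), (0 : ℝ)) ∈ D₁ →
      ∃ D₂ : Set (ℝ × ℝ), D₂.Nonempty ∧ IsOpen D₂ ∧ D₂ ⊆ u '' D₁) ∧
    (¬ ∃ D' : Set (ℝ × ℝ), IsOpen D' ∧ ((0 : ℝ), (0 : ℝ)) ∈ D' ∧ D' ⊆ u '' D) := by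
  constructor
  · intro D₁ hsub hopen h0
    obtain ⟨ε, hε, hball⟩ := Metric.isOpen_iff.mp hopen _ h0
    refine ⟨Set.Ioo (ε/4) (ε/2) ×ˢ Set.Ioo (-(ε^2/16)) (ε^2/16),
      ⟨(ε/3, 0), ⟨⟨by linarith, by linarith⟩, ⟨by nlinarith, by nlinarith⟩⟩⟩,
      isOpen_Ioo.prod isOpen_Ioo, ?_⟩
    rintro ⟨a, b⟩ ⟨⟨ha1, ha2⟩, hb1, hb2⟩
    have ha0 : 0 < a := by linarith
    refine ⟨(a, b / a), hball ?_, ?_⟩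
    · have h1 : |a| < ε := by rw [abs_of_pos ha0]; linarith
      have h2 : |b / a| < ε := by
        rw [abs_div, div_lt_iff₀ (by rwa [abs_of_pos ha0])]
        rw [abs_of_pos ha0]
        rcases abs_cases b with ⟨hb, _⟩ | ⟨hb, _⟩ <;> nlinarith
      simp only [Metric.mem_ball, Prod.dist_eq, dist_zero_right, Real.norm_eq_abs]
      exact max_lt h1 h2
    · rw [hu]
      rw [mul_div_cancel₀ _ ha0.ne']
  · rintro ⟨D', hopen, h0, hsub⟩
    obtain ⟨ε, hε, hball⟩ := Metric.isOpen_iff.mp hopen _ h0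
    have hmem : ((0 : ℝ), ε/2) ∈ D' := by
      apply hball
      simp only [Metric.mem_ball, Prod.dist_eq, dist_zero_right, Real.norm_eq_abs]
      apply max_lt <;> simp [abs_of_pos, hε] <;> linarith
    obtain ⟨⟨x, y⟩, -, heq⟩ := hsub hmem
    rw [hu] at heq
    obtain ⟨h1, h2⟩ := Prod.mk.injEq .. ▸ heq
    rw [h1, zero_mul] at h2
    linarith
end

section
/- Let n and r be natural numbers with r ≥ 1, let ε > 0, and let θ : ℂ → ℂ be continuous at 0 and satisfy z^n = r²·z^(2r−2)·θ(z^r) for every z ∈ ℂ with 0 < |z| < ε. Then r divides n + 2, moreover 2r ≤ n + 2, and θ(ζ) = ζ^((n+2−2r)/r)/r² for every ζ with 0 < |ζ| < ε^r. -/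
open Filter Complex Topology Real

/-- Constraints on the ramification order: if the Hopf differential `z^n dz²`
pulls back as `z^n = r² z^(2r−2) θ(z^r)` near the origin, with `θ` continuous
at `0`, then `r ∣ n+2`, `2r ≤ n+2`, and `θ(ζ) = ζ^((n+2−2r)/r)/r²`. -/
theorem ramification_constraints
    (n r : ℕ) (hr : 1 ≤ r) (ε : ℝ) (hε : 0 < ε)
    (θ : ℂ → ℂ) (hθ : ContinuousAt θ 0)
    (heq : ∀ z : ℂ, 0 < ‖z‖ → ‖z‖ < ε →
      z ^ n = (r : ℂ) ^ 2 * z ^ (2 * r - 2) * θ (z ^ r)) :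
    r ∣ (n + 2) ∧ 2 * r ≤ n + 2 ∧
      ∀ ζ : ℂ, 0 < ‖ζ‖ → ‖ζ‖ < ε ^ r →
        θ ζ = ζ ^ ((n + 2 - 2 * r) / r) / (r : ℂ) ^ 2 := by
  have hrC : (r:ℂ) ≠ 0 := Nat.cast_ne_zero.mpr (by omega)
  have hr2 : ((r:ℂ))^2 ≠ 0 := pow_ne_zero _ hrC
  have hrR : (0:ℝ) < r := by exact_mod_cast Nat.lt_of_lt_of_le Nat.zero_lt_one hr
  -- Step 1 : 2r ≤ n + 2
  have hle : 2 * r ≤ n + 2 := by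
    by_contra hlt
    push_neg at hlt
    set k := 2 * r - 2 - n with hk
    have hk1 : 1 ≤ k := by omega
    have hsum : 2 * r - 2 = n + k := by omega
    have key : ∀ t : ℝ, 0 < t → t < ε →
        ‖θ (((t:ℂ))^r)‖ = ((r:ℝ)^2 * t^k)⁻¹ := by
      intro t ht htε
      have hz : (t:ℂ) ≠ 0 := by exact_mod_cast ht.ne'
      have habs : ‖(t:ℂ)‖ = t := by
        rw [Complex.norm_real, Real.norm_eq_abs, abs_of_pos ht]
      have h := heq (t:ℂ) (by rw [habs]; exact ht) (by rw [habs]; exact htε)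
      rw [hsum, pow_add] at h
      have hzn : ((t:ℂ))^n ≠ 0 := pow_ne_zero _ hz
      have h2 : ((t:ℂ))^n * (1:ℂ) = ((t:ℂ))^n * ((r:ℂ)^2 * ((t:ℂ))^k * θ (((t:ℂ))^r)) := by
        rw [mul_one]; linear_combination h
      have h3 := mul_left_cancel₀ hzn h2
      have h4 : θ (((t:ℂ))^r) = ((r:ℂ)^2 * ((t:ℂ))^k)⁻¹ :=
        eq_inv_of_mul_eq_one_right h3.symm
      rw [h4]
      simp [norm_inv, norm_mul, norm_pow, Complex.norm_real, abs_of_pos ht]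
    have hlim1 : Tendsto (fun t : ℝ => θ (((t:ℂ))^r)) (𝓝[>] (0:ℝ)) (𝓝 (θ 0)) := by
      apply hθ.tendsto.comp
      have h0 : Tendsto (fun t : ℝ => ((t:ℂ))^r) (𝓝 0) (𝓝 0) := by
        have : Tendsto (fun t : ℝ => ((t:ℂ))^r) (𝓝 0) (𝓝 (((0:ℝ):ℂ)^r)) := (Complex.continuous_ofReal.pow r).tendsto 0
        rw [Complex.ofReal_zero, zero_pow (by omega : r ≠ 0)] at this; exact this
      exact h0.mono_left nhdsWithin_le_nhds
    have hnorm1 : Tendsto (fun t : ℝ => ‖θ (((t:ℂ))^r)‖) (𝓝[>] (0:ℝ)) (𝓝 ‖θ 0‖) :=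
      hlim1.norm
    have hlim2 : Tendsto (fun t : ℝ => ((r:ℝ)^2 * t^k)⁻¹) (𝓝[>] (0:ℝ)) atTop := by
      apply Filter.Tendsto.inv_tendsto_nhdsGT_zero
      rw [tendsto_nhdsWithin_iff]
      constructor
      · have : Tendsto (fun t : ℝ => (r:ℝ)^2 * t^k) (𝓝 0) (𝓝 0) := by
          have hc : Continuous (fun t : ℝ => (r:ℝ)^2 * t^k) :=
            continuous_const.mul (continuous_pow k)
          have := hc.tendsto 0
          simpa [zero_pow (by omega : k ≠ 0)] using this
        exact this.mono_left nhdsWithin_le_nhds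
      · filter_upwards [self_mem_nhdsWithin] with t ht
        have ht' : (0:ℝ) < t := ht
        have : (0:ℝ) < (r:ℝ)^2 * t^k := by positivity
        exact this
    have hev : (fun t : ℝ => ((r:ℝ)^2 * t^k)⁻¹) =ᶠ[𝓝[>] (0:ℝ)]
        (fun t : ℝ => ‖θ (((t:ℂ))^r)‖) := by
      filter_upwards [Ioo_mem_nhdsGT_of_mem ⟨le_refl (0:ℝ), hε⟩] with t ht
      exact (key t ht.1 ht.2).symm
    have hnorm2 : Tendsto (fun t : ℝ => ‖θ (((t:ℂ))^r)‖) (𝓝[>] (0:ℝ)) atTop :=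
      hlim2.congr' hev
    exact not_tendsto_nhds_of_tendsto_atTop hnorm2 ‖θ 0‖ hnorm1
  -- key formula
  set m := n + 2 - 2 * r with hmdef
  have keyθ : ∀ z : ℂ, 0 < ‖z‖ → ‖z‖ < ε →
      θ (z^r) = z^m / (r:ℂ)^2 := by
    intro z h0 hεz
    have hz : z ≠ 0 := by
      intro h; rw [h] at h0; simp at h0
    have h := heq z h0 hεz
    have hsplit : z^n = z^(2*r-2) * z^m := by
      rw [← pow_add]; congr 1; omega
    rw [hsplit] at h
    have hz2 : z^(2*r-2) ≠ 0 := pow_ne_zero _ hz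
    have h2 : (z^(2*r-2)) * ((r:ℂ)^2 * θ (z^r)) = (z^(2*r-2)) * z^m := by
      linear_combination -h
    have h3 := mul_left_cancel₀ hz2 h2
    field_simp
    linear_combination h3
  -- divisibility
  have hω := Complex.isPrimitiveRoot_exp r (by omega)
  set ω := Complex.exp (2 * Real.pi * Complex.I / r) with hωdef
  have hωr : ω^r = 1 := hω.pow_eq_one
  have hωabs : ‖ω‖ = 1 := by
    have h1 : (‖ω‖)^r = 1 := by rw [← norm_pow, hωr, norm_one]
    rcases (pow_eq_one_iff_cases).mp h1 with h | h | h
    · omega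
    · exact h
    · nlinarith [norm_nonneg ω, h.1]
  have hz0 : ((ε/2 : ℝ) : ℂ) ≠ 0 := by
    exact_mod_cast (by positivity : (0:ℝ) < ε/2).ne'
  have habs0 : ‖((ε/2 : ℝ) : ℂ)‖ = ε/2 := by
    rw [Complex.norm_real, Real.norm_eq_abs, abs_of_pos (by positivity)]
  have e1 : θ ((((ε/2 : ℝ) : ℂ))^r) = (((ε/2 : ℝ) : ℂ))^m / (r:ℂ)^2 :=
    keyθ _ (by rw [habs0]; positivity) (by rw [habs0]; linarith)
  have e2 : θ (((((ε/2 : ℝ) : ℂ)) * ω)^r) = ((((ε/2 : ℝ) : ℂ)) * ω)^m / (r:ℂ)^2 :=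
    keyθ _ (by rw [norm_mul, habs0, hωabs]; positivity)
      (by rw [norm_mul, habs0, hωabs]; simpa using by linarith)
  have hsame : ((((ε/2 : ℝ) : ℂ)) * ω)^r = (((ε/2 : ℝ) : ℂ))^r := by
    rw [mul_pow, hωr, mul_one]
  rw [hsame, e1, mul_pow] at e2
  have hωm : ω^m = 1 := by
    field_simp at e2
    have hεC : ((ε:ℂ))^m ≠ 0 := pow_ne_zero _ (by exact_mod_cast hε.ne')
    exact e2.symm
  have hdvdm : r ∣ m := hω.dvd_of_pow_eq_one m hωm
  have hdvd : r ∣ n + 2 := by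
    have hn2 : n + 2 = m + 2 * r := by omega
    rw [hn2]
    exact Nat.dvd_add hdvdm ⟨2, by ring⟩
  refine ⟨hdvd, hle, ?_⟩
  intro ζ h0 hεr
  obtain ⟨z, hz⟩ := IsAlgClosed.exists_pow_nat_eq ζ (by omega : 0 < r)
  have hζ0 : ζ ≠ 0 := by intro h; rw [h] at h0; simp at h0
  have hzne : z ≠ 0 := by
    intro h
    apply hζ0
    rw [← hz, h, zero_pow (by omega : r ≠ 0)]
  have habsz : (‖z‖)^r = ‖ζ‖ := by rw [← norm_pow, hz]
  have hzpos : 0 < ‖z‖ := norm_pos_iff.mpr hzne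
  have hzlt : ‖z‖ < ε := by
    by_contra hge
    push_neg at hge
    have : ε^r ≤ (‖z‖)^r := pow_le_pow_left₀ (le_of_lt hε) hge r
    rw [habsz] at this
    linarith
  have hform := keyθ z hzpos hzlt
  rw [hz] at hform
  rw [hform]
  congr 1
  rw [← hz, ← pow_mul, Nat.mul_div_cancel' hdvdm]
end
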